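/- arXiv:2511.11566 — 4 statements merged into one kernel-verified Lean document; each statement's English description precedes it below -/
import Mathlib

section
/- For every r ∈ ℝ one has r·e^{r²/2}·ξ(r) + √(2/π) > 0, where ξ(r) = erf(r/√2) + 1. Consequently, for a ∈ ℝ, M > a and any r ∈ ℝ, the quantity σ(M,r) = (M − a)·e^{r²/2}·ξ(r) / (r·e^{r²/2}·ξ(r) + √(2/π)) is a well-defined positive real number, and the left-truncated Gaussian distribution on [a, ∞) with parameters μ = r·σ(M,r) + a and σ = σ(M,r) has mean exactly M. -/
open MeasureTheory Real Filter Set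

/-- The error function. -/
noncomputable def erf (x : ℝ) : ℝ :=
  (2 / Real.sqrt Real.pi) * ∫ t in (0:ℝ)..x, Real.exp (-t ^ 2)

/-- `ξ(r) = erf(r/√2) + 1`. -/
noncomputable def xi (r : ℝ) : ℝ := erf (r / Real.sqrt 2) + 1

/-- Normalizing constant of the left-truncated Gaussian on `[a, ∞)` with parameters `μ, σ`. -/
noncomputable def lZ (a μ σ : ℝ) : ℝ :=
  ∫ x in Set.Ici a, Real.exp (-(x - μ) ^ 2 / (2 * σ ^ 2))

/-- Mean of the left-truncated Gaussian on `[a, ∞)` with parameters `μ, σ`. -/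
noncomputable def lMean (a μ σ : ℝ) : ℝ :=
  (∫ x in Set.Ici a, x * Real.exp (-(x - μ) ^ 2 / (2 * σ ^ 2))) / lZ a μ σ

/-- Variance of the left-truncated Gaussian on `[a, ∞)` with parameters `μ, σ`. -/
noncomputable def lVar (a μ σ : ℝ) : ℝ :=
  (∫ x in Set.Ici a, (x - lMean a μ σ) ^ 2 * Real.exp (-(x - μ) ^ 2 / (2 * σ ^ 2))) / lZ a μ σ

/-- The spread parameter `σ(M,r)` for which the left-truncated Gaussian on `[a, ∞)`
with `μ = r·σ + a` has mean `M`. -/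
noncomputable def sigmaMr (a M r : ℝ) : ℝ :=
  (M - a) * Real.exp (r ^ 2 / 2) * xi r /
    (r * Real.exp (r ^ 2 / 2) * xi r + Real.sqrt (2 / Real.pi))

/-- Form II of the variance of a left-truncated Gaussian on `[a, ∞)` with mean `M` and
normalized location parameter `r`. -/
noncomputable def varII (a M r : ℝ) : ℝ :=
  (M - a) ^ 2 *
      (Real.pi * Real.exp (r ^ 2) * xi r ^ 2 -
        Real.sqrt (2 * Real.pi) * r * Real.exp (r ^ 2 / 2) * xi r - 2) /
    (Real.pi * (r * Real.exp (r ^ 2 / 2) * xi r + Real.sqrt (2 / Real.pi)) ^ 2)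

lemma gauss_int : Integrable (fun t : ℝ => Real.exp (-t ^ 2)) := by
  simpa using integrable_exp_neg_mul_sq one_pos

lemma gauss_mul_int : Integrable (fun t : ℝ => t * Real.exp (-t ^ 2)) := by
  simpa using integrable_mul_exp_neg_mul_sq one_pos

lemma ioi_gauss (c : ℝ) :
    ∫ t in Ioi c, Real.exp (-t ^ 2)
      = Real.sqrt Real.pi / 2 - ∫ t in (0:ℝ)..c, Real.exp (-t ^ 2) := by
  have h := gauss_int
  have h1 : (∫ t in Iic c, Real.exp (-t ^ 2)) + ∫ t in Ioi c, Real.exp (-t ^ 2)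
      = ∫ t : ℝ, Real.exp (-t ^ 2) := intervalIntegral.integral_Iic_add_Ioi h.integrableOn h.integrableOn
  have h2 : (∫ t in Iic (0:ℝ), Real.exp (-t ^ 2)) + ∫ t in Ioi (0:ℝ), Real.exp (-t ^ 2)
      = ∫ t : ℝ, Real.exp (-t ^ 2) := intervalIntegral.integral_Iic_add_Ioi h.integrableOn h.integrableOn
  have h3 : (∫ t in Iic c, Real.exp (-t ^ 2)) - ∫ t in Iic (0:ℝ), Real.exp (-t ^ 2)
      = ∫ t in (0:ℝ)..c, Real.exp (-t ^ 2) :=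
    intervalIntegral.integral_Iic_sub_Iic h.integrableOn h.integrableOn
  have h4 : ∫ t in Ioi (0:ℝ), Real.exp (-t ^ 2) = Real.sqrt Real.pi / 2 := by
    simpa using integral_gaussian_Ioi 1
  linarith

lemma xi_eq (r : ℝ) :
    Real.sqrt Real.pi / 2 * xi r
      = ∫ t in Ioi (-(r / Real.sqrt 2)), Real.exp (-t ^ 2) := by
  rw [ioi_gauss]
  have hodd : ∫ t in (0:ℝ)..(-(r / Real.sqrt 2)), Real.exp (-t ^ 2)
      = -∫ t in (0:ℝ)..(r / Real.sqrt 2), Real.exp (-t ^ 2) := by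
    have := intervalIntegral.integral_comp_neg (a := (0:ℝ)) (b := r / Real.sqrt 2)
      (fun t : ℝ => Real.exp (-t ^ 2))
    simp only [neg_sq, neg_zero] at this
    rw [intervalIntegral.integral_symm, ← this]
  rw [hodd]
  have hπ : Real.sqrt Real.pi ≠ 0 := by positivity
  unfold xi erf
  field_simp
  ring

lemma xi_pos (r : ℝ) : 0 < xi r := by
  have h : 0 < ∫ t in Ioi (-(r / Real.sqrt 2)), Real.exp (-t ^ 2) := by
    rw [setIntegral_pos_iff_support_of_nonneg_ae]
    · have : Function.support (fun t : ℝ => Real.exp (-t ^ 2)) = univ := by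
        ext t; simp [Function.mem_support, (Real.exp_pos _).ne']
      rw [this, univ_inter, Real.volume_Ioi]
      simp
    · filter_upwards with t using (Real.exp_pos _).le
    · exact gauss_int.integrableOn
  have hπ : (0:ℝ) < Real.sqrt Real.pi / 2 := by positivity
  nlinarith [xi_eq r]

lemma gauss_moment (c : ℝ) :
    ∫ t in Ioi c, t * Real.exp (-t ^ 2) = Real.exp (-c ^ 2) / 2 := by
  have hderiv : ∀ x ∈ Ici c, HasDerivAt (fun t : ℝ => -(Real.exp (-t ^ 2) / 2))
      (x * Real.exp (-x ^ 2)) x := by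
    intro x _
    have h := ((((hasDerivAt_pow 2 x).neg).exp).div_const 2).neg
    refine h.congr_deriv ?_
    simp [pow_one]
    ring
  have hint : IntegrableOn (fun t : ℝ => t * Real.exp (-t ^ 2)) (Ioi c) :=
    gauss_mul_int.integrableOn
  have htend : Tendsto (fun t : ℝ => -(Real.exp (-t ^ 2) / 2)) atTop (nhds 0) := by
    have h1 : Tendsto (fun t : ℝ => -t ^ 2) atTop atBot := by
      apply tendsto_neg_atTop_atBot.comp
      exact tendsto_pow_atTop two_ne_zero |>.comp tendsto_id
    have h2 : Tendsto (fun t : ℝ => Real.exp (-t ^ 2)) atTop (nhds 0) :=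
      Real.tendsto_exp_atBot.comp h1
    have := (h2.div_const 2).neg
    simpa using this
  have := integral_Ioi_of_hasDerivAt_of_tendsto' hderiv hint htend
  rw [this]; ring

lemma mills {c : ℝ} (hc : 0 < c) :
    ∫ t in Ioi c, Real.exp (-t ^ 2) < Real.exp (-c ^ 2) / (2 * c) := by
  have h2 : 0 < ∫ t in Ioi c, (t - c) * Real.exp (-t ^ 2) := by
    rw [setIntegral_pos_iff_support_of_nonneg_ae]
    · have hsub : Ioi c ⊆
          (Function.support fun t : ℝ => (t - c) * Real.exp (-t ^ 2)) ∩ Ioi c := by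
        intro t ht
        refine ⟨?_, ht⟩
        have : 0 < (t - c) * Real.exp (-t ^ 2) :=
          mul_pos (by simp only [mem_Ioi] at ht; linarith) (Real.exp_pos _)
        simp only [Function.mem_support]
        exact this.ne'
      calc (0:ENNReal) < volume (Ioi c) := by rw [Real.volume_Ioi]; simp
        _ ≤ _ := measure_mono hsub
    · filter_upwards [ae_restrict_mem measurableSet_Ioi] with t ht
      have : (0:ℝ) ≤ t - c := by simp [mem_Ioi] at ht; linarith
      positivity
    · have : (fun t : ℝ => (t - c) * Real.exp (-t ^ 2))
          = fun t : ℝ => t * Real.exp (-t ^ 2) - c * Real.exp (-t ^ 2) := by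
        funext t; ring
      rw [this]
      exact (gauss_mul_int.integrableOn).sub ((gauss_int.const_mul c).integrableOn)
  have h3 : ∫ t in Ioi c, (t - c) * Real.exp (-t ^ 2)
      = (∫ t in Ioi c, t * Real.exp (-t ^ 2)) - c * ∫ t in Ioi c, Real.exp (-t ^ 2) := by
    have : (fun t : ℝ => (t - c) * Real.exp (-t ^ 2))
        = fun t : ℝ => t * Real.exp (-t ^ 2) - c * Real.exp (-t ^ 2) := by
      funext t; ring
    rw [this, integral_sub gauss_mul_int.integrableOn ((gauss_int.const_mul c).integrableOn),
      integral_const_mul]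
  rw [gauss_moment] at h3
  rw [lt_div_iff₀ (by positivity), mul_comm]
  nlinarith

lemma D_pos (r : ℝ) :
    0 < r * Real.exp (r ^ 2 / 2) * xi r + Real.sqrt (2 / Real.pi) := by
  have hsq : (0:ℝ) < Real.sqrt (2 / Real.pi) := by
    apply Real.sqrt_pos.mpr; positivity
  rcases le_or_gt 0 r with hr | hr
  · have : 0 ≤ r * Real.exp (r ^ 2 / 2) * xi r :=
      mul_nonneg (mul_nonneg hr (Real.exp_pos _).le) (xi_pos r).le
    linarith
  · set c : ℝ := -(r / Real.sqrt 2) with hc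
    have h2 : (0:ℝ) < Real.sqrt 2 := by positivity
    have hcpos : 0 < c := by
      rw [hc, neg_pos]; exact div_neg_of_neg_of_pos hr h2
    have hm := mills hcpos
    have hxe := xi_eq r
    have hc2 : c ^ 2 = r ^ 2 / 2 := by
      show (-(r / Real.sqrt 2)) ^ 2 = r ^ 2 / 2
      rw [neg_sq, div_pow, Real.sq_sqrt (by norm_num : (0:ℝ) ≤ 2)]
    -- xi r < exp (-(r^2/2)) / (2 * c) * (2 / sqrt π)
    have hπ : (0:ℝ) < Real.sqrt Real.pi := Real.sqrt_pos.mpr Real.pi_pos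
    have hxi_lt : Real.sqrt Real.pi / 2 * xi r < Real.exp (-(r ^ 2 / 2)) / (2 * c) := by
      rw [hxe, ← hc2]; exact hm
    -- so r * E * xi r > -sqrt(2/π)
    have hE : Real.exp (r ^ 2 / 2) * Real.exp (-(r ^ 2 / 2)) = 1 := by
      rw [← Real.exp_add]; simp
    have hrc : r = -(c * Real.sqrt 2) := by
      rw [hc]; field_simp
    have hsq2 : Real.sqrt (2 / Real.pi) = Real.sqrt 2 / Real.sqrt Real.pi :=
      Real.sqrt_div (by norm_num) _
    -- now conclude
    have hξ := xi_pos r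
    have hEpos := Real.exp_pos (r ^ 2 / 2)
    -- from hxi_lt : √π/2 * xi r < exp (-(r^2/2)) / (2*c)
    -- multiply by (-r) * E  (positive) : (-r) * E * √π/2 * xi r < (-r) * E * exp(-(r^2/2))/(2c)
    have key : -(r * Real.exp (r ^ 2 / 2) * xi r) < Real.sqrt (2 / Real.pi) := by
      have hneg : (0:ℝ) < -r := by linarith
      have h5 := mul_lt_mul_of_pos_left hxi_lt (mul_pos hneg hEpos)
      -- LHS: (-r) * E * (√π/2 * ξ) ; RHS: (-r)*E*exp(-(r^2/2))/(2c)
      have hRHS : -r * Real.exp (r ^ 2 / 2) * (Real.exp (-(r ^ 2 / 2)) / (2 * c))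
          = Real.sqrt 2 / 2 := by
        have hm1 : -r / (2 * c) = Real.sqrt 2 / 2 := by
          have hr2 : -r = c * Real.sqrt 2 := by rw [hc]; field_simp
          rw [hr2]
          rw [div_eq_div_iff (by positivity : (2:ℝ) * c ≠ 0) (by norm_num : (2:ℝ) ≠ 0)]
          ring
        calc -r * Real.exp (r ^ 2 / 2) * (Real.exp (-(r ^ 2 / 2)) / (2 * c))
            = Real.exp (r ^ 2 / 2) * Real.exp (-(r ^ 2 / 2)) * (-r / (2 * c)) := by ring
          _ = 1 * (Real.sqrt 2 / 2) := by rw [hE, hm1]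
          _ = Real.sqrt 2 / 2 := one_mul _
      have hLHS : -(r * Real.exp (r ^ 2 / 2) * xi r) * (Real.sqrt Real.pi / 2)
          < Real.sqrt 2 / 2 := by
        calc -(r * Real.exp (r ^ 2 / 2) * xi r) * (Real.sqrt Real.pi / 2)
            = -r * Real.exp (r ^ 2 / 2) * (Real.sqrt Real.pi / 2 * xi r) := by ring
          _ < -r * Real.exp (r ^ 2 / 2) * (Real.exp (-(r ^ 2 / 2)) / (2 * c)) := by
              exact mul_lt_mul_of_pos_left hxi_lt (by positivity)
          _ = Real.sqrt 2 / 2 := hRHS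
      rw [hsq2, ← sub_pos]
      have h7 : Real.sqrt 2 / Real.sqrt Real.pi - -(r * Real.exp (r ^ 2 / 2) * xi r)
          = (Real.sqrt 2 / 2 - -(r * Real.exp (r ^ 2 / 2) * xi r) * (Real.sqrt Real.pi / 2))
            * (2 / Real.sqrt Real.pi) := by
        field_simp
      rw [h7]
      apply mul_pos _ (by positivity)
      rw [sub_pos]
      exact hLHS
    linarith

lemma integral_Ioi_comp_sub (g : ℝ → ℝ) (a μ : ℝ) :
    ∫ x in Ioi a, g (x - μ) = ∫ y in Ioi (a - μ), g y := by
  have key : ∀ x : ℝ, (Ioi a).indicator (fun x => g (x - μ)) x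
      = (Ioi (a - μ)).indicator g (x - μ) := by
    intro x
    by_cases h : a < x
    · rw [indicator_of_mem (mem_Ioi.mpr h), indicator_of_mem]
      exact mem_Ioi.mpr (by linarith)
    · rw [indicator_of_notMem (fun hx => h (mem_Ioi.mp hx)),
        indicator_of_notMem (fun hx => h (by have := mem_Ioi.mp hx; linarith))]
  calc ∫ x in Ioi a, g (x - μ)
      = ∫ x, (Ioi a).indicator (fun x => g (x - μ)) x :=
        (integral_indicator measurableSet_Ioi).symm
    _ = ∫ x, (Ioi (a - μ)).indicator g (x - μ) := by simp_rw [key]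
    _ = ∫ y, (Ioi (a - μ)).indicator g y := integral_sub_right_eq_self _ μ
    _ = ∫ y in Ioi (a - μ), g y := integral_indicator measurableSet_Ioi

lemma exponent_eq {σ : ℝ} (hσ : 0 < σ) (y : ℝ) :
    -y ^ 2 / (2 * σ ^ 2) = -((σ * Real.sqrt 2)⁻¹ * y) ^ 2 := by
  have h2 : Real.sqrt 2 ^ 2 = 2 := Real.sq_sqrt (by norm_num)
  have hss : (σ * Real.sqrt 2) ^ 2 = σ ^ 2 * 2 := by rw [mul_pow, h2]
  rw [mul_pow, inv_pow, hss, (by ring : σ ^ 2 * 2 = 2 * σ ^ 2), inv_mul_eq_div, neg_div]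

lemma lZ_eq {σ : ℝ} (hσ : 0 < σ) (a μ : ℝ) :
    lZ a μ σ = σ * Real.sqrt 2 * (Real.sqrt Real.pi / 2 * xi ((μ - a) / σ)) := by
  have h2 : (0:ℝ) < Real.sqrt 2 := by positivity
  set k : ℝ := (σ * Real.sqrt 2)⁻¹ with hk
  have hkpos : 0 < k := by positivity
  unfold lZ
  rw [integral_Ici_eq_integral_Ioi]
  have step0 : ∫ x in Ioi a, Real.exp (-(x - μ) ^ 2 / (2 * σ ^ 2))
      = ∫ x in Ioi a, (fun y => Real.exp (-(k * y) ^ 2)) (x - μ) := by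
    refine setIntegral_congr_fun measurableSet_Ioi fun x _ => ?_
    simp only
    rw [exponent_eq hσ]
  rw [step0, integral_Ioi_comp_sub (fun y => Real.exp (-(k * y) ^ 2)) a μ,
    integral_comp_mul_left_Ioi (fun t => Real.exp (-t ^ 2)) _ hkpos]
  have hkd : k * (a - μ) = -(((μ - a) / σ) / Real.sqrt 2) := by
    rw [hk]
    field_simp
    ring
  rw [hkd, ← xi_eq ((μ - a) / σ)]
  rw [smul_eq_mul, hk, inv_inv]

lemma lNum_eq {σ : ℝ} (hσ : 0 < σ) (a μ : ℝ) :
    ∫ x in Ici a, x * Real.exp (-(x - μ) ^ 2 / (2 * σ ^ 2))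
      = μ * lZ a μ σ + σ ^ 2 * Real.exp (-(a - μ) ^ 2 / (2 * σ ^ 2)) := by
  have hb : (0:ℝ) < (2 * σ ^ 2)⁻¹ := by positivity
  have key : ∀ y : ℝ, -(2 * σ ^ 2)⁻¹ * y ^ 2 = -y ^ 2 / (2 * σ ^ 2) := fun y => by
    rw [neg_mul, inv_mul_eq_div, neg_div]
  have hInt0 : Integrable fun x : ℝ => Real.exp (-(x - μ) ^ 2 / (2 * σ ^ 2)) := by
    have h := (integrable_exp_neg_mul_sq hb).comp_sub_right μ
    simpa only [key] using h
  have hInt1 : Integrable fun x : ℝ => (x - μ) * Real.exp (-(x - μ) ^ 2 / (2 * σ ^ 2)) := by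
    have h := (integrable_mul_exp_neg_mul_sq hb).comp_sub_right μ
    simpa only [key] using h
  have hderiv : ∀ x ∈ Ici a,
      HasDerivAt (fun x : ℝ => -(σ ^ 2 * Real.exp (-(x - μ) ^ 2 / (2 * σ ^ 2))))
        ((x - μ) * Real.exp (-(x - μ) ^ 2 / (2 * σ ^ 2))) x := by
    intro x _
    have h1 : HasDerivAt (fun x : ℝ => -(x - μ) ^ 2 / (2 * σ ^ 2))
        (-(2 * (x - μ) ^ 1 * 1) / (2 * σ ^ 2)) x :=
      ((((hasDerivAt_id x).sub_const μ).pow 2).neg).div_const (2 * σ ^ 2)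
    have h2 := (h1.exp.const_mul (σ ^ 2)).neg
    refine h2.congr_deriv ?_
    have hσ2 : (2 * σ ^ 2) ≠ 0 := by positivity
    field_simp
  have htend : Tendsto (fun x : ℝ => -(σ ^ 2 * Real.exp (-(x - μ) ^ 2 / (2 * σ ^ 2))))
      atTop (nhds 0) := by
    have t1 : Tendsto (fun x : ℝ => x - μ) atTop atTop := by
      simpa [sub_eq_add_neg] using tendsto_atTop_add_const_right atTop (-μ) tendsto_id
    have t2 : Tendsto (fun x : ℝ => (x - μ) ^ 2) atTop atTop := by
      have := t1.atTop_mul_atTop₀ t1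
      simpa [pow_two] using this
    have t3 : Tendsto (fun x : ℝ => (x - μ) ^ 2 / (2 * σ ^ 2)) atTop atTop :=
      t2.atTop_div_const (by positivity)
    have t4 : Tendsto (fun x : ℝ => -(x - μ) ^ 2 / (2 * σ ^ 2)) atTop atBot := by
      have := tendsto_neg_atTop_atBot.comp t3
      simpa [Function.comp_def, neg_div] using this
    have t5 : Tendsto (fun x : ℝ => Real.exp (-(x - μ) ^ 2 / (2 * σ ^ 2))) atTop (nhds 0) :=
      Real.tendsto_exp_atBot.comp t4
    have := (t5.const_mul (σ ^ 2)).neg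
    simpa using this
  have hFTC : ∫ x in Ioi a, (x - μ) * Real.exp (-(x - μ) ^ 2 / (2 * σ ^ 2))
      = σ ^ 2 * Real.exp (-(a - μ) ^ 2 / (2 * σ ^ 2)) := by
    have h := integral_Ioi_of_hasDerivAt_of_tendsto' hderiv hInt1.integrableOn htend
    rw [h]; ring
  rw [integral_Ici_eq_integral_Ioi]
  have split : ∫ x in Ioi a, x * Real.exp (-(x - μ) ^ 2 / (2 * σ ^ 2))
      = (∫ x in Ioi a, (x - μ) * Real.exp (-(x - μ) ^ 2 / (2 * σ ^ 2)))
        + ∫ x in Ioi a, μ * Real.exp (-(x - μ) ^ 2 / (2 * σ ^ 2)) := by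
    rw [← integral_add hInt1.integrableOn ((hInt0.const_mul μ).integrableOn)]
    refine setIntegral_congr_fun measurableSet_Ioi fun x _ => ?_
    ring
  rw [split, hFTC, MeasureTheory.integral_const_mul]
  unfold lZ
  rw [integral_Ici_eq_integral_Ioi]
  ring

/-- the denominator `r·e^{r²/2}·ξ(r) + √(2/π)` is always positive; consequently
`σ(M,r)` is a well-defined positive real, and the left-truncated Gaussian with parameters
`μ = r·σ(M,r) + a`, `σ = σ(M,r)` has mean exactly `M`. -/
theorem sigmaMr_pos_and_mean :
    (∀ r : ℝ, 0 < r * Real.exp (r ^ 2 / 2) * xi r + Real.sqrt (2 / Real.pi)) ∧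
      ∀ a M r : ℝ, a < M →
        0 < sigmaMr a M r ∧ lMean a (r * sigmaMr a M r + a) (sigmaMr a M r) = M := by
  refine ⟨D_pos, fun a M r hM => ?_⟩
  have hMa : 0 < M - a := sub_pos.mpr hM
  have hξ : 0 < xi r := xi_pos r
  have hD := D_pos r
  have hE : (0:ℝ) < Real.exp (r ^ 2 / 2) := Real.exp_pos _
  have hσ : 0 < sigmaMr a M r := by
    unfold sigmaMr
    exact div_pos (mul_pos (mul_pos hMa hE) hξ) hD
  refine ⟨hσ, ?_⟩
  set σ : ℝ := sigmaMr a M r with hσdef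
  set μ : ℝ := r * σ + a with hμ
  have hσne : σ ≠ 0 := hσ.ne'
  have hr : (μ - a) / σ = r := by rw [hμ]; field_simp; ring
  have hZ : lZ a μ σ = σ * Real.sqrt 2 * (Real.sqrt Real.pi / 2 * xi r) := by
    rw [lZ_eq hσ, hr]
  have hZpos : 0 < lZ a μ σ := by
    rw [hZ]
    have h2 : (0:ℝ) < Real.sqrt 2 := by positivity
    have hπ : (0:ℝ) < Real.sqrt Real.pi := Real.sqrt_pos.mpr Real.pi_pos
    positivity
  have hexp : -(a - μ) ^ 2 / (2 * σ ^ 2) = -(r ^ 2 / 2) := by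
    have h1 : a - μ = -(r * σ) := by rw [hμ]; ring
    rw [h1, neg_sq, mul_pow]
    field_simp
  have hNum := lNum_eq hσ a μ
  unfold lMean
  rw [hNum, hexp, div_eq_iff hZpos.ne', hZ]
  have hs2π : Real.sqrt (2 / Real.pi) = Real.sqrt 2 / Real.sqrt Real.pi :=
    Real.sqrt_div (by norm_num) _
  have hss : Real.sqrt 2 * Real.sqrt 2 = 2 := Real.mul_self_sqrt (by norm_num)
  have hπ : (0:ℝ) < Real.sqrt Real.pi := Real.sqrt_pos.mpr Real.pi_pos
  have hσeq : σ = (M - a) * Real.exp (r ^ 2 / 2) * xi r /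
      (r * Real.exp (r ^ 2 / 2) * xi r + Real.sqrt (2 / Real.pi)) := rfl
  rw [hs2π] at hD hσeq
  have hEF : Real.exp (r ^ 2 / 2) * Real.exp (-(r ^ 2 / 2)) = 1 := by
    rw [← Real.exp_add]; simp
  have hPinv : Real.sqrt Real.pi * (Real.sqrt Real.pi)⁻¹ = 1 := mul_inv_cancel₀ hπ.ne'
  have hkey : σ * (r * Real.exp (r ^ 2 / 2) * xi r + Real.sqrt 2 / Real.sqrt Real.pi)
      = (M - a) * Real.exp (r ^ 2 / 2) * xi r := by
    rw [hσeq, div_mul_cancel₀ _ hD.ne']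
  have h2 : (M - a - r * σ) * Real.exp (r ^ 2 / 2) * xi r * Real.sqrt Real.pi
      = σ * Real.sqrt 2 := by
    linear_combination (-Real.sqrt Real.pi) * hkey + (σ * Real.sqrt 2) * hPinv
  rw [hμ]
  linear_combination (-σ * Real.sqrt 2 * Real.exp (-(r ^ 2 / 2)) / 2) * h2
    + (σ * Real.sqrt 2 * (Real.sqrt Real.pi / 2) * xi r * (M - a - r * σ)) * hEF
    + (-σ ^ 2 * Real.exp (-(r ^ 2 / 2)) / 2) * hss
end

section
/- Fix a ∈ ℝ and M > a. The function Var(M,r) = (M − a)²·(π·e^{r²}·ξ(r)² − √(2π)·r·e^{r²/2}·ξ(r) − 2) / (π·(r·e^{r²/2}·ξ(r) + √(2/π))²), where ξ(r) = erf(r/√2) + 1, satisfies lim_{r → −∞} Var(M,r) = (M − a)². -/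
open MeasureTheory Real Filter Set

noncomputable def Ig (x : ℝ) : ℝ := ∫ t in Set.Ioi x, Real.exp (-t^2)
noncomputable def Jg (x : ℝ) : ℝ := ∫ t in Set.Ioi x, (t^6)⁻¹ * Real.exp (-t^2)

lemma intOn_exp (x : ℝ) : IntegrableOn (fun t : ℝ => Real.exp (-t^2)) (Set.Ioi x) := by
  have := (integrable_exp_neg_mul_sq (b := 1) one_pos).integrableOn (s := Set.Ioi x)
  simpa using this

lemma intOn_inv_exp (x : ℝ) (hx : 0 < x) :
    IntegrableOn (fun t : ℝ => (t^6)⁻¹ * Real.exp (-t^2)) (Set.Ioi x) := by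
  apply Integrable.mono' ((intOn_exp x).const_mul ((x^6)⁻¹))
  · exact ((measurable_id.pow_const 6).inv.mul
      ((measurable_id.pow_const 2).neg.exp)).aestronglyMeasurable
  · filter_upwards [ae_restrict_mem measurableSet_Ioi] with t ht
    have hxt : x < t := ht
    have h1 : (0:ℝ) < t := hx.trans hxt
    rw [Real.norm_eq_abs, abs_of_nonneg (by positivity)]
    have : (t^6)⁻¹ ≤ (x^6)⁻¹ := by
      apply inv_anti₀ (by positivity)
      exact pow_le_pow_left₀ hx.le hxt.le 6
    exact mul_le_mul_of_nonneg_right this (Real.exp_nonneg _)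

lemma exp_neg_sq_tendsto : Tendsto (fun t : ℝ => Real.exp (-t^2)) atTop (nhds 0) := by
  apply Real.tendsto_exp_atBot.comp
  exact tendsto_neg_atTop_atBot.comp (tendsto_pow_atTop (by norm_num : 2 ≠ 0))

lemma hd_exp (t : ℝ) : HasDerivAt (fun t : ℝ => Real.exp (-t^2)) (Real.exp (-t^2) * (-2*t)) t := by
  have h1 : HasDerivAt (fun t : ℝ => -t^2) (-2*t) t := by
    exact ((hasDerivAt_pow 2 t).neg).congr_deriv (by simp)
  exact h1.exp

noncomputable def Fg (t : ℝ) : ℝ :=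
  Real.exp (-t^2) * (-(1/2)/t^1 + (1/4)/t^3 - (3/8)/t^5)

lemma hd_Fg (t : ℝ) (ht : t ≠ 0) :
    HasDerivAt Fg (Real.exp (-t^2) * (1 + (15/8)*(t^6)⁻¹)) t := by
  have h1 : HasDerivAt (fun t : ℝ => -(1/2)/t^1 + (1/4)/t^3 - (3/8)/t^5)
      ((1/2)/t^2 - (3/4)/t^4 + (15/8)/t^6) t := by
    have ha := ((hasDerivAt_const t (-(1/2) : ℝ)).div (hasDerivAt_pow 1 t)
      (by simpa using ht))
    have hb := ((hasDerivAt_const t ((1/4) : ℝ)).div (hasDerivAt_pow 3 t) (pow_ne_zero 3 ht))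
    have hc := ((hasDerivAt_const t ((3/8) : ℝ)).div (hasDerivAt_pow 5 t) (pow_ne_zero 5 ht))
    have := (ha.add hb).sub hc
    refine this.congr_deriv ?_
    field_simp
    ring
  have := (hd_exp t).mul h1
  refine this.congr_deriv ?_
  field_simp
  ring

lemma Fg_tendsto : Tendsto Fg atTop (nhds 0) := by
  have h2 : Tendsto (fun t : ℝ => -(1/2)/t^1 + (1/4)/t^3 - (3/8)/t^5) atTop
      (nhds (0 + 0 - 0)) := by
    refine Tendsto.sub (Tendsto.add ?_ ?_) ?_ <;>
      exact tendsto_const_nhds.div_atTop (tendsto_pow_atTop (by norm_num))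
  have h3 := exp_neg_sq_tendsto.mul h2
  have h4 : (0 : ℝ) * (0 + 0 - 0) = 0 := by norm_num
  rw [h4] at h3
  exact h3.congr (fun t => by rw [Fg])

lemma key1 (x : ℝ) (hx : 0 < x) :
    Ig x + (15/8) * Jg x = Real.exp (-x^2) * (1/(2*x) - 1/(4*x^3) + 3/(8*x^5)) := by
  have hint : IntegrableOn (fun t : ℝ => Real.exp (-t^2) * (1 + (15/8)*(t^6)⁻¹))
      (Set.Ioi x) := by
    exact IntegrableOn.congr_fun ((intOn_exp x).add ((intOn_inv_exp x hx).const_mul (15/8)))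
      (fun t _ => by simp; ring) measurableSet_Ioi
  have h := integral_Ioi_of_hasDerivAt_of_tendsto (a := x) (m := 0)
    (f := Fg) (f' := fun t : ℝ => Real.exp (-t^2) * (1 + (15/8)*(t^6)⁻¹))
    ((hd_Fg x hx.ne').continuousAt.continuousWithinAt)
    (fun t ht => hd_Fg t (hx.trans ht).ne') hint Fg_tendsto
  have hsplit : ∫ t in Set.Ioi x, Real.exp (-t^2) * (1 + (15/8)*(t^6)⁻¹)
      = Ig x + (15/8) * Jg x := by
    rw [show (fun t : ℝ => Real.exp (-t^2) * (1 + (15/8)*(t^6)⁻¹))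
        = (fun t : ℝ => Real.exp (-t^2) + (15/8) * ((t^6)⁻¹ * Real.exp (-t^2))) from
        funext fun t => by ring]
    rw [integral_add (intOn_exp x) ((intOn_inv_exp x hx).const_mul (15/8)),
      integral_const_mul]
    rfl
  rw [hsplit] at h
  rw [h, Fg]
  field_simp
  ring

lemma intOn_mul_exp (x : ℝ) : IntegrableOn (fun t : ℝ => t * Real.exp (-t^2)) (Set.Ioi x) := by
  have := (integrable_mul_exp_neg_mul_sq (b := 1) one_pos).integrableOn (s := Set.Ioi x)
  simpa using this

lemma key2 (x : ℝ) : ∫ t in Set.Ioi x, t * Real.exp (-t^2) = Real.exp (-x^2) / 2 := by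
  have h := integral_Ioi_of_hasDerivAt_of_tendsto (a := x) (m := 0)
    (f := fun t : ℝ => -Real.exp (-t^2) / 2)
    (f' := fun t : ℝ => t * Real.exp (-t^2)) ?_ ?_ ?_ ?_
  · rw [h]; ring
  · exact (Continuous.continuousWithinAt (by continuity))
  · intro t _
    have := ((hd_exp t).neg).div_const 2
    refine this.congr_deriv ?_; ring
  · exact intOn_mul_exp x
  · have : Tendsto (fun t : ℝ => -Real.exp (-t^2) / 2) atTop (nhds (-0/2)) :=
      (exp_neg_sq_tendsto.neg).div_const 2
    simpa using this

noncomputable def gg (x : ℝ) : ℝ := 2*x*Real.exp (x^2) * Ig x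
noncomputable def tg (x : ℝ) : ℝ := (15/4)*x*Real.exp (x^2) * Jg x
noncomputable def pg (x : ℝ) : ℝ := x^2 * (1 - gg x)
noncomputable def qg (x : ℝ) : ℝ := x^2 * (1 - 2 * pg x)
noncomputable def Ag (x : ℝ) : ℝ := qg x - 2 * pg x + (pg x)^2 * (x^2)⁻¹

lemma Ig_nonneg (x : ℝ) : 0 ≤ Ig x :=
  setIntegral_nonneg measurableSet_Ioi (fun t _ => (Real.exp_nonneg _))
lemma Jg_nonneg (x : ℝ) (hx : 0 < x) : 0 ≤ Jg x :=
  setIntegral_nonneg measurableSet_Ioi (fun t ht => by positivity)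

lemma Ig_le (x : ℝ) (hx : 0 < x) : Ig x ≤ Real.exp (-x^2) / (2*x) := by
  have h1 : Ig x ≤ ∫ t in Set.Ioi x, x⁻¹ * (t * Real.exp (-t^2)) := by
    apply setIntegral_mono_on (intOn_exp x) ((intOn_mul_exp x).const_mul _) measurableSet_Ioi
    intro t ht
    have h2 : (1:ℝ) ≤ x⁻¹ * t := by
      rw [← div_eq_inv_mul]
      exact (one_le_div hx).2 (le_of_lt ht)
    calc Real.exp (-t^2) = 1 * Real.exp (-t^2) := by ring
    _ ≤ x⁻¹ * t * Real.exp (-t^2) := by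
        exact mul_le_mul_of_nonneg_right h2 (Real.exp_nonneg _)
    _ = x⁻¹ * (t * Real.exp (-t^2)) := by ring
  rw [integral_const_mul, key2] at h1
  calc Ig x ≤ x⁻¹ * (Real.exp (-x^2)/2) := h1
  _ = Real.exp (-x^2) / (2*x) := by field_simp

lemma Jg_le (x : ℝ) (hx : 0 < x) : Jg x ≤ (x^6)⁻¹ * (Real.exp (-x^2) / (2*x)) := by
  have h1 : Jg x ≤ ∫ t in Set.Ioi x, (x^6)⁻¹ * Real.exp (-t^2) := by
    apply setIntegral_mono_on (intOn_inv_exp x hx) ((intOn_exp x).const_mul _) measurableSet_Ioi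
    intro t ht
    exact mul_le_mul_of_nonneg_right
      (inv_anti₀ (by positivity) (pow_le_pow_left₀ hx.le (le_of_lt ht) 6)) (Real.exp_nonneg _)
  rw [integral_const_mul] at h1
  exact h1.trans (mul_le_mul_of_nonneg_left (Ig_le x hx) (by positivity))

lemma erf_Ig (x : ℝ) (hx : 0 ≤ x) : 1 - erf x = 2 / Real.sqrt Real.pi * Ig x := by
  have htot : ∫ t in Set.Ioi (0:ℝ), Real.exp (-t^2) = Real.sqrt Real.pi / 2 := by
    have := integral_gaussian_Ioi 1
    simp only [neg_mul, one_mul, div_one] at this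
    simpa using this
  have hsplit : (∫ t in (0:ℝ)..x, Real.exp (-t^2)) + Ig x
      = ∫ t in Set.Ioi (0:ℝ), Real.exp (-t^2) := by
    rw [intervalIntegral.integral_of_le hx, Ig,
      ← setIntegral_union (Set.Ioc_disjoint_Ioi le_rfl) measurableSet_Ioi
        ((intOn_exp 0).mono Set.Ioc_subset_Ioi_self le_rfl) (intOn_exp x),
      Set.Ioc_union_Ioi_eq_Ioi hx]
  have hπ : (0:ℝ) < Real.sqrt Real.pi := Real.sqrt_pos.2 Real.pi_pos
  rw [erf]
  have : (∫ t in (0:ℝ)..x, Real.exp (-t^2)) = Real.sqrt Real.pi / 2 - Ig x := by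
    rw [← htot, ← hsplit]; ring
  rw [this]
  field_simp
  ring

lemma erf_neg (x : ℝ) : erf (-x) = - erf x := by
  rw [erf, erf]
  have h : (∫ t in (0:ℝ)..(-x), Real.exp (-t^2)) = - ∫ t in (0:ℝ)..x, Real.exp (-t^2) := by
    rw [intervalIntegral.integral_symm]
    congr 1
    have := intervalIntegral.integral_comp_neg (a := (0:ℝ)) (b := x)
      (fun t => Real.exp (-t^2))
    simp only [neg_zero] at this
    rw [← this]
    apply intervalIntegral.integral_congr
    intro t _
    simp [neg_pow]
  rw [h]; ring

lemma gg_eq (x : ℝ) (hx : 0 < x) : gg x = 1 - 1/(2*x^2) + 3/(4*x^4) - tg x := by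
  have h := key1 x hx
  have hIg : Ig x = Real.exp (-x^2) * (1/(2*x) - 1/(4*x^3) + 3/(8*x^5)) - (15/8) * Jg x := by
    linarith
  rw [gg, tg, hIg, Real.exp_neg]
  have hE : Real.exp (x^2) ≠ 0 := (Real.exp_pos _).ne'
  field_simp
  ring

lemma tg_nonneg (x : ℝ) (hx : 0 < x) : 0 ≤ tg x := by
  rw [tg]; have := Jg_nonneg x hx; positivity

lemma tg_le (x : ℝ) (hx : 0 < x) : tg x ≤ 15/8 * (x^6)⁻¹ := by
  rw [tg]
  have h := Jg_le x hx
  have h2 : (15/4)*x*Real.exp (x^2) * Jg x ≤ (15/4)*x*Real.exp (x^2) * ((x^6)⁻¹ * (Real.exp (-x^2) / (2*x))) :=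
    mul_le_mul_of_nonneg_left h (by positivity)
  refine h2.trans (le_of_eq ?_)
  rw [Real.exp_neg]
  have hE : Real.exp (x^2) ≠ 0 := (Real.exp_pos _).ne'
  field_simp
  ring

lemma inv_sq_tendsto : Tendsto (fun x : ℝ => (x^2)⁻¹) atTop (nhds 0) :=
  (tendsto_pow_atTop (by norm_num : 2 ≠ 0)).inv_tendsto_atTop

lemma tg_mul_sq (n : ℕ) (hn : n ≤ 4) :
    Tendsto (fun x : ℝ => x^n * tg x) atTop (nhds 0) := by
  apply tendsto_of_tendsto_of_tendsto_of_le_of_le'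
    (tendsto_const_nhds : Tendsto (fun _ : ℝ => (0:ℝ)) atTop (nhds 0))
    (by simpa using inv_sq_tendsto.const_mul (15/8 : ℝ) :
      Tendsto (fun x : ℝ => 15/8 * (x^2)⁻¹) atTop (nhds 0))
  · filter_upwards [eventually_gt_atTop 0] with x hx
    have := tg_nonneg x hx
    positivity
  · filter_upwards [eventually_ge_atTop 1] with x hx
    have hx0 : (0:ℝ) < x := lt_of_lt_of_le one_pos hx
    have h1 : x^n * tg x ≤ x^n * (15/8 * (x^6)⁻¹) :=
      mul_le_mul_of_nonneg_left (tg_le x hx0) (by positivity)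
    have h2 : x^n ≤ x^4 := pow_le_pow_right₀ hx hn
    have h3 : x^n * (15/8 * (x^6)⁻¹) ≤ 15/8 * (x^2)⁻¹ := by
      rw [show (15:ℝ)/8 * (x^2)⁻¹ = x^4 * (15/8 * (x^6)⁻¹) by field_simp]
      exact mul_le_mul_of_nonneg_right h2 (by positivity)
    exact h1.trans h3

lemma pg_eq (x : ℝ) (hx : 0 < x) : pg x = 1/2 - 3/4 * (x^2)⁻¹ + x^2 * tg x := by
  rw [pg, gg_eq x hx]
  field_simp
  ring

lemma pg_tendsto : Tendsto pg atTop (nhds (1/2)) := by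
  have h : Tendsto (fun x : ℝ => 1/2 - 3/4 * (x^2)⁻¹ + x^2 * tg x) atTop
      (nhds (1/2 - 3/4 * 0 + 0)) :=
    (tendsto_const_nhds.sub (inv_sq_tendsto.const_mul _)).add (tg_mul_sq 2 (by norm_num))
  rw [show (1:ℝ)/2 - 3/4 * 0 + 0 = 1/2 by norm_num] at h
  apply h.congr'
  filter_upwards [eventually_gt_atTop 0] with x hx
  exact (pg_eq x hx).symm

lemma qg_eq (x : ℝ) (hx : 0 < x) : qg x = 3/2 - 2 * (x^4 * tg x) := by
  rw [qg, pg_eq x hx]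
  field_simp
  ring

lemma qg_tendsto : Tendsto qg atTop (nhds (3/2)) := by
  have h : Tendsto (fun x : ℝ => 3/2 - 2 * (x^4 * tg x)) atTop (nhds (3/2 - 2*0)) :=
    tendsto_const_nhds.sub ((tg_mul_sq 4 le_rfl).const_mul 2)
  rw [show (3:ℝ)/2 - 2*0 = 3/2 by norm_num] at h
  apply h.congr'
  filter_upwards [eventually_gt_atTop 0] with x hx
  exact (qg_eq x hx).symm

lemma Ag_tendsto : Tendsto Ag atTop (nhds (1/2)) := by
  have h : Tendsto (fun x => qg x - 2 * pg x + (pg x)^2 * (x^2)⁻¹) atTop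
      (nhds (3/2 - 2 * (1/2) + (1/2)^2 * 0)) :=
    (qg_tendsto.sub (pg_tendsto.const_mul 2)).add ((pg_tendsto.pow 2).mul inv_sq_tendsto)
  rw [show (3:ℝ)/2 - 2 * (1/2) + (1/2)^2 * 0 = 1/2 by norm_num] at h
  exact h

lemma varII_eq (a M r : ℝ) (hr : r < 0) :
    varII a M r = (M - a)^2 * Ag (-r / Real.sqrt 2) / (2 * (pg (-r / Real.sqrt 2))^2) := by
  set x := -r / Real.sqrt 2 with hxdef
  have hs2 : (0:ℝ) < Real.sqrt 2 := Real.sqrt_pos.2 (by norm_num)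
  have hsπ : (0:ℝ) < Real.sqrt Real.pi := Real.sqrt_pos.2 Real.pi_pos
  have hx : 0 < x := div_pos (neg_pos.2 hr) hs2
  have h22 : Real.sqrt 2 ^ 2 = 2 := Real.sq_sqrt (by norm_num)
  have hππ : Real.sqrt Real.pi ^ 2 = Real.pi := Real.sq_sqrt Real.pi_pos.le
  have hrx : r = -(Real.sqrt 2 * x) := by
    rw [hxdef]; field_simp
  have hr2 : r ^ 2 = 2 * x^2 := by
    rw [hrx, neg_pow]
    rw [mul_pow, h22]
    ring
  have hE1 : Real.exp (r^2/2) = Real.exp (x^2) := by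
    rw [hr2]; congr 1; ring
  have hE2 : Real.exp (r^2) = Real.exp (x^2) ^ 2 := by
    rw [hr2, two_mul, Real.exp_add]
    exact (sq _).symm
  have hxi : xi r = 2 / Real.sqrt Real.pi * Ig x := by
    rw [xi]
    have h1 : r / Real.sqrt 2 = -x := by rw [hrx]; field_simp [mul_comm]
    rw [h1, erf_neg]
    have := erf_Ig x hx.le
    linarith
  have hs2π : Real.sqrt (2*Real.pi) = Real.sqrt 2 * Real.sqrt Real.pi :=
    Real.sqrt_mul (by norm_num) _
  have hs2dπ : Real.sqrt (2/Real.pi) = Real.sqrt 2 / Real.sqrt Real.pi :=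
    Real.sqrt_div (by norm_num) _
  -- numerator pieces
  have hterm1 : Real.pi * Real.exp (r ^ 2) * xi r ^ 2 = (gg x)^2 / x^2 := by
    rw [hE2, hxi, gg]
    field_simp
    rw [hππ]
  have hterm2 : Real.sqrt (2 * Real.pi) * r * Real.exp (r ^ 2 / 2) * xi r = -(2 * gg x) := by
    rw [hs2π, hE1, hxi, gg, hrx]
    field_simp
    linear_combination (-(Ig x)) * h22
  have hDr : Real.pi * (r * Real.exp (r ^ 2 / 2) * xi r + Real.sqrt (2 / Real.pi)) ^ 2
      = 2 * (1 - gg x)^2 := by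
    have hfac : r * Real.exp (r ^ 2 / 2) * xi r + Real.sqrt (2 / Real.pi)
        = Real.sqrt 2 / Real.sqrt Real.pi * (1 - gg x) := by
      rw [hE1, hxi, hs2dπ, gg, hrx]
      field_simp
      ring
    rw [hfac, mul_pow, div_pow, h22, hππ]
    field_simp
  rw [varII, hterm1, hterm2, hDr]
  have e1 : (M - a)^2 * Ag x = ((M-a)^2 * ((gg x)^2/x^2 - -(2 * gg x) - 2)) * x^4 := by
    rw [Ag, qg, pg]
    field_simp
    ring
  have e2 : 2 * pg x ^ 2 = (2*(1 - gg x)^2) * x^4 := by rw [pg]; ring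
  rw [e1, e2, mul_div_mul_right _ _ (pow_ne_zero 4 hx.ne')]

/-- `Var(M,r) → (M − a)²` as `r → −∞`. -/
theorem tendsto_varII_atBot (a M : ℝ) (hM : a < M) :
    Filter.Tendsto (fun r : ℝ => varII a M r) Filter.atBot (nhds ((M - a) ^ 2)) := by
  have hmap : Tendsto (fun r : ℝ => -r / Real.sqrt 2) atBot atTop := by
    apply Tendsto.atTop_div_const (Real.sqrt_pos.2 (by norm_num : (0:ℝ) < 2))
    exact tendsto_neg_atBot_atTop
  have hden : Tendsto (fun x => 2 * pg x ^ 2) atTop (nhds (1/2)) := by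
    have h := (pg_tendsto.pow 2).const_mul (2:ℝ)
    rw [show (2:ℝ) * (1/2)^2 = 1/2 by norm_num] at h
    exact h
  have hnum : Tendsto (fun x => (M - a)^2 * Ag x) atTop (nhds ((M-a)^2 * (1/2))) :=
    Ag_tendsto.const_mul _
  have hG : Tendsto (fun x => (M - a)^2 * Ag x / (2 * pg x ^ 2)) atTop
      (nhds ((M-a)^2 * (1/2) / (1/2))) := hnum.div hden (by norm_num)
  rw [show (M-a)^2 * (1/2) / ((1:ℝ)/2) = (M-a)^2 by ring] at hG
  have hcomp := hG.comp hmap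
  apply hcomp.congr'
  filter_upwards [eventually_lt_atBot 0] with r hr
  exact (varII_eq a M r hr).symm
end

section
/- Fix a ∈ ℝ and M > a. The function Var(M,r) = (M − a)²·(π·e^{r²}·ξ(r)² − √(2π)·r·e^{r²/2}·ξ(r) − 2) / (π·(r·e^{r²/2}·ξ(r) + √(2/π))²), where ξ(r) = erf(r/√2) + 1, satisfies lim_{r → +∞} Var(M,r) = 0; more precisely, Var(M,r) is asymptotically equivalent to ((M − a)/r)² as r → +∞. -/
open MeasureTheory Real Filter Set

lemma erf_tendsto : Tendsto erf atTop (nhds 1) := by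
  have hint : IntegrableOn (fun t : ℝ => Real.exp (-t ^ 2)) (Ioi 0) := by
    have := (integrable_exp_neg_mul_sq (b := 1) one_pos).integrableOn (s := Ioi 0)
    simpa using this
  have h := intervalIntegral_tendsto_integral_Ioi (μ := volume) 0 hint tendsto_id
  have hval : (∫ t in Ioi (0:ℝ), Real.exp (-t ^ 2)) = Real.sqrt Real.pi / 2 := by
    have := integral_gaussian_Ioi 1
    simpa using this
  rw [hval] at h
  have := h.const_mul (2 / Real.sqrt Real.pi)
  have hpi : Real.sqrt Real.pi ≠ 0 := by positivity
  have hval2 : 2 / Real.sqrt Real.pi * (Real.sqrt Real.pi / 2) = 1 := by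
    field_simp
  rw [hval2] at this
  exact this

lemma xi_tendsto : Tendsto xi atTop (nhds 2) := by
  have h2 : (0:ℝ) < Real.sqrt 2 := by positivity
  have hcomp : Tendsto (fun r : ℝ => r / Real.sqrt 2) atTop atTop :=
    tendsto_id.atTop_div_const h2
  have h := (erf_tendsto.comp hcomp).add_const 1
  have : Tendsto (fun r : ℝ => erf (r / Real.sqrt 2) + 1) atTop (nhds (1+1)) := h
  norm_num at this
  exact this

lemma one_le_xi {r : ℝ} (hr : 0 ≤ r) : 1 ≤ xi r := by
  have h : 0 ≤ erf (r / Real.sqrt 2) := by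
    apply mul_nonneg (by positivity)
    apply intervalIntegral.integral_nonneg (by positivity)
    intro t _
    positivity
  simp only [xi]; linarith

lemma tendsto_B : Tendsto (fun r : ℝ => r * Real.exp (-(r ^ 2 / 2))) atTop (nhds 0) := by
  apply squeeze_zero' (g := fun r : ℝ => r * Real.exp (-r))
  · filter_upwards [eventually_ge_atTop (0:ℝ)] with r hr
    positivity
  · filter_upwards [eventually_ge_atTop (2:ℝ)] with r hr
    have h1 : -(r ^ 2 / 2) ≤ -r := by nlinarith
    have := Real.exp_le_exp.mpr h1
    nlinarith [Real.exp_pos (-(r^2/2))]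
  · have := Real.tendsto_pow_mul_exp_neg_atTop_nhds_zero 1
    simpa using this

lemma tendsto_C : Tendsto (fun r : ℝ => Real.exp (-(r ^ 2))) atTop (nhds 0) := by
  have h1 : Tendsto (fun r : ℝ => r ^ 2) atTop atTop := tendsto_pow_atTop two_ne_zero
  exact Real.tendsto_exp_neg_atTop_nhds_zero.comp h1

lemma tendsto_exp_half : Tendsto (fun r : ℝ => Real.exp (-(r ^ 2 / 2))) atTop (nhds 0) := by
  have h1 : Tendsto (fun r : ℝ => r ^ 2 / 2) atTop atTop :=
    (tendsto_pow_atTop two_ne_zero).atTop_div_const two_pos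
  exact Real.tendsto_exp_neg_atTop_nhds_zero.comp h1

lemma tendsto_E : Tendsto (fun r : ℝ => Real.exp (-(r ^ 2 / 2)) / r) atTop (nhds 0) :=
  tendsto_exp_half.div_atTop tendsto_id

open Asymptotics in
/-- `Var(M,r) → 0` as `r → +∞`; more precisely `Var(M,r) ~ ((M − a)/r)²`
as `r → +∞`. -/
theorem tendsto_varII_atTop (a M : ℝ) (hM : a < M) :
    Filter.Tendsto (fun r : ℝ => varII a M r) Filter.atTop (nhds 0) ∧
      (fun r : ℝ => varII a M r) ~[Filter.atTop] (fun r : ℝ => ((M - a) / r) ^ 2) := by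
  have hMa : M - a ≠ 0 := sub_ne_zero.mpr hM.ne'
  set c : ℝ := Real.sqrt (2 / Real.pi) with hc
  have hc0 : 0 ≤ c := Real.sqrt_nonneg _
  set F : ℝ → ℝ := fun r =>
    (1 - c * (r * Real.exp (-(r ^ 2 / 2))) / xi r
        - 2 / Real.pi * Real.exp (-(r ^ 2)) / (xi r) ^ 2) /
      (1 + c * (Real.exp (-(r ^ 2 / 2)) / r) / xi r) ^ 2 with hF
  -- key algebraic identity
  have key : ∀ r : ℝ, 1 ≤ r → varII a M r / ((M - a) / r) ^ 2 = F r := by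
    intro r hr
    have hr0 : (0:ℝ) < r := lt_of_lt_of_le one_pos hr
    have hxi : (0:ℝ) < xi r := lt_of_lt_of_le one_pos (one_le_xi hr0.le)
    have hspos : (0:ℝ) < Real.exp (r ^ 2 / 2) := Real.exp_pos _
    have hexp2 : Real.exp (r ^ 2) = Real.exp (r ^ 2 / 2) * Real.exp (r ^ 2 / 2) := by
      rw [← Real.exp_add]; ring_nf
    have hsqrt : Real.sqrt (2 * Real.pi) = Real.pi * c := by
      rw [hc, show (2 * Real.pi) = Real.pi ^ 2 * (2 / Real.pi) by
        field_simp, Real.sqrt_mul (sq_nonneg _), Real.sqrt_sq Real.pi_pos.le]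
    have hden : r * Real.exp (r ^ 2 / 2) * xi r + c ≠ 0 := by positivity
    have hden2 : 1 + c * (Real.exp (-(r ^ 2 / 2)) / r) / xi r ≠ 0 := by positivity
    have hpi : Real.pi ≠ 0 := Real.pi_ne_zero
    rw [hF]
    simp only [varII, hexp2, hsqrt, Real.exp_neg, ← hc]
    clear_value c
    clear hF
    field_simp
  -- limit of F is 1
  have hFlim : Tendsto F atTop (nhds 1) := by
    have hnum : Tendsto (fun r : ℝ =>
        1 - c * (r * Real.exp (-(r ^ 2 / 2))) / xi r
          - 2 / Real.pi * Real.exp (-(r ^ 2)) / (xi r) ^ 2) atTop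
        (nhds (1 - c * 0 / 2 - 2 / Real.pi * 0 / 2 ^ 2)) := by
      exact (tendsto_const_nhds.sub
        (((tendsto_const_nhds.mul tendsto_B).div xi_tendsto two_ne_zero))).sub
        (((tendsto_const_nhds.mul tendsto_C).div (xi_tendsto.pow 2) (by norm_num)))
    have hdenl : Tendsto (fun r : ℝ =>
        (1 + c * (Real.exp (-(r ^ 2 / 2)) / r) / xi r) ^ 2) atTop
        (nhds ((1 + c * 0 / 2) ^ 2)) := by
      exact (tendsto_const_nhds.add
        ((tendsto_const_nhds.mul tendsto_E).div xi_tendsto two_ne_zero)).pow 2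
    have := hnum.div hdenl (by norm_num)
    norm_num at this
    exact this
  have hratio : Tendsto (fun r : ℝ => varII a M r / ((M - a) / r) ^ 2) atTop (nhds 1) := by
    apply hFlim.congr'
    filter_upwards [eventually_ge_atTop (1:ℝ)] with r hr
    exact (key r hr).symm
  have heq : (fun r : ℝ => varII a M r) ~[atTop] (fun r : ℝ => ((M - a) / r) ^ 2) := by
    apply Asymptotics.isEquivalent_of_tendsto_one
    · simpa [Pi.div_def] using hratio
  refine ⟨?_, heq⟩
  have hg : Tendsto (fun r : ℝ => ((M - a) / r) ^ 2) atTop (nhds 0) := by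
    have := (tendsto_const_nhds (x := M - a) (f := atTop)).div_atTop
      (tendsto_id (α := ℝ))
    have h2 := this.pow 2
    norm_num at h2
    exact h2
  exact heq.symm.tendsto_nhds hg
end

section
/- Fix a ∈ ℝ and M > a, and let Var(M,r) denote the variance of the left-truncated Gaussian on [a, ∞) with mean M and normalized location parameter r. If there exists r₀ ∈ ℝ at which the function r ↦ Var(M,r) attains a global maximum over ℝ, then Var(M,r₀) < (M − a)². -/
open MeasureTheory Real Filter Set

lemma key_alg (x y : ℝ) (hx : 0 < x)
    (h : 4*x^2 = 6*x*y + 12*x + 4*y^2 + 4*y + y^3) :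
    2*x < y^2 + 6*y + 8 := by
  have hid : (4*x - 3*y - 6)^2 = (y+2)^2*(4*y+9) := by linear_combination 4*h
  rcases le_or_gt y (-2) with hy | hy
  · exfalso
    nlinarith [hid, sq_nonneg (y+2), mul_pos hx hx, sq_nonneg (4*x-3*y-6)]
  · by_contra hcon
    push_neg at hcon
    nlinarith [hid, sq_nonneg (y+2), mul_pos (by linarith : (0:ℝ) < y + 2) hx]

lemma erf_hasDerivAt (x : ℝ) :
    HasDerivAt erf (2 / Real.sqrt Real.pi * Real.exp (-x ^ 2)) x := by
  have hcont : Continuous fun t : ℝ => Real.exp (-t ^ 2) := by fun_prop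
  have h1 : HasDerivAt (fun u : ℝ => ∫ t in (0:ℝ)..u, Real.exp (-t ^ 2))
      (Real.exp (-x ^ 2)) x :=
    (intervalIntegral.integral_hasStrictDerivAt_right
      (hcont.intervalIntegrable _ _) (hcont.stronglyMeasurableAtFilter _ _)
      hcont.continuousAt).hasDerivAt
  exact h1.const_mul (2 / Real.sqrt Real.pi)

lemma xi_hasDerivAt (r : ℝ) :
    HasDerivAt xi (Real.sqrt (2 / Real.pi) * Real.exp (-(r ^ 2 / 2))) r := by
  have h0 : HasDerivAt (fun y : ℝ => y / Real.sqrt 2) (1 / Real.sqrt 2) r := by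
    simpa using (hasDerivAt_id r).div_const (Real.sqrt 2)
  have h1 := (erf_hasDerivAt (r / Real.sqrt 2)).comp r h0
  have h2 : HasDerivAt xi
      (2 / Real.sqrt Real.pi * Real.exp (-(r / Real.sqrt 2) ^ 2) * (1 / Real.sqrt 2)) r := by
    exact h1.add_const 1
  have hs2 : Real.sqrt 2 ^ 2 = 2 := Real.sq_sqrt (by norm_num)
  have hpip : (0:ℝ) < Real.sqrt Real.pi := Real.sqrt_pos.mpr Real.pi_pos
  have h2pos : (0:ℝ) < Real.sqrt 2 := by positivity
  have hq : (r / Real.sqrt 2) ^ 2 = r ^ 2 / 2 := by rw [div_pow, hs2]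
  have heq : 2 / Real.sqrt Real.pi * Real.exp (-(r / Real.sqrt 2) ^ 2) * (1 / Real.sqrt 2)
      = Real.sqrt (2 / Real.pi) * Real.exp (-(r ^ 2 / 2)) := by
    have h22 : Real.sqrt 2 * Real.sqrt 2 = 2 := Real.mul_self_sqrt (by norm_num)
    have hsmall : 2 / Real.sqrt Real.pi * (1 / Real.sqrt 2) = Real.sqrt 2 / Real.sqrt Real.pi := by
      field_simp
      linear_combination -hs2
    rw [hq, Real.sqrt_div (by norm_num : (0:ℝ) ≤ 2), mul_right_comm, hsmall]
  rw [heq] at h2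
  exact h2

set_option maxHeartbeats 2000000 in
/-- if `r ↦ Var(M,r)` attains a global maximum over `ℝ` at some `r₀`, then
`Var(M,r₀) < (M − a)²`. -/
theorem varII_globalMax_lt (a M : ℝ) (hM : a < M) (r₀ : ℝ)
    (hmax : ∀ r : ℝ, varII a M r ≤ varII a M r₀) :
    varII a M r₀ < (M - a) ^ 2 := by
  have hπ : (0:ℝ) < Real.pi := Real.pi_pos
  have hMa : (0:ℝ) < M - a := sub_pos.mpr hM
  have hK : (0:ℝ) < (M - a) ^ 2 := by positivity
  have hc2 : Real.pi * Real.sqrt (2 / Real.pi) ^ 2 = 2 := by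
    rw [Real.sq_sqrt (by positivity)]
    field_simp
  have hs : Real.sqrt (2 * Real.pi) = Real.pi * Real.sqrt (2 / Real.pi) := by
    rw [show (2 * Real.pi) = (2 / Real.pi) * Real.pi ^ 2 by field_simp,
      Real.sqrt_mul (by positivity) (Real.pi ^ 2), Real.sqrt_sq hπ.le]
    ring
  have hPQ : Real.exp (r₀ ^ 2 / 2) * Real.exp (-(r₀ ^ 2 / 2)) = 1 := by
    rw [← Real.exp_add]; norm_num
  have hE2 : Real.exp (r₀ ^ 2) = Real.exp (r₀ ^ 2 / 2) ^ 2 := by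
    have h := Real.exp_add (r₀ ^ 2 / 2) (r₀ ^ 2 / 2)
    rw [show r₀ ^ 2 / 2 + r₀ ^ 2 / 2 = r₀ ^ 2 by ring] at h
    rw [h]; ring
  have hPpos : (0:ℝ) < Real.exp (r₀ ^ 2 / 2) := Real.exp_pos _
  -- Case: xi r₀ = 0
  by_cases hX0 : xi r₀ = 0
  · have hval : varII a M r₀ = -(M - a) ^ 2 := by
      unfold varII
      rw [hX0]
      rw [show Real.pi * (r₀ * Real.exp (r₀ ^ 2 / 2) * 0 + Real.sqrt (2 / Real.pi)) ^ 2 = 2 by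
        rw [mul_zero, zero_add]; exact hc2]
      ring
    rw [hval]; linarith
  -- Case: denominator inner term = 0
  by_cases hd0 : r₀ * Real.exp (r₀ ^ 2 / 2) * xi r₀ + Real.sqrt (2 / Real.pi) = 0
  · have hval : varII a M r₀ = 0 := by
      unfold varII
      rw [hd0]
      simp
    rw [hval]; exact hK
  -- Main case
  have hXi := xi_hasDerivAt r₀
  have hsq' : HasDerivAt (fun r : ℝ => r ^ 2 / 2) r₀ r₀ := by
    simpa using (hasDerivAt_pow 2 r₀).div_const 2
  have hExp : HasDerivAt (fun r : ℝ => Real.exp (r ^ 2 / 2)) (Real.exp (r₀ ^ 2 / 2) * r₀) r₀ := hsq'.exp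
  have hN1 : HasDerivAt (fun r : ℝ => Real.exp (r ^ 2)) (Real.exp (r₀ ^ 2) * (2 * r₀)) r₀ := by
    simpa using (hasDerivAt_pow 2 r₀).exp
  have hXsq : HasDerivAt (fun r : ℝ => xi r ^ 2)
      (2 * xi r₀ * (Real.sqrt (2 / Real.pi) * Real.exp (-(r₀ ^ 2 / 2)))) r₀ := by
    exact (hXi.fun_pow 2).congr_deriv (by norm_num)
  have hNa := (hN1.const_mul Real.pi).fun_mul hXsq
  have hNb := (((hasDerivAt_id r₀).const_mul (Real.sqrt (2 * Real.pi))).fun_mul hExp).fun_mul hXi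
  have hNf := (hNa.fun_sub hNb).sub_const 2
  have hnum := hNf.const_mul ((M - a) ^ 2)
  simp only [id_eq] at hnum
  have hUf : HasDerivAt (fun r : ℝ => Real.exp (r ^ 2 / 2) * xi r)
      (r₀ * (Real.exp (r₀ ^ 2 / 2) * xi r₀) + Real.sqrt (2 / Real.pi)) r₀ := by
    have h := hExp.mul hXi
    refine h.congr_deriv ?_
    have hPe : Real.exp (r₀ ^ 2 / 2) * Real.exp (-(r₀ ^ 2 / 2)) = 1 := hPQ
    linear_combination (Real.sqrt (2 / Real.pi)) * hPe
  have hDf : HasDerivAt (fun r : ℝ => r * Real.exp (r ^ 2 / 2) * xi r + Real.sqrt (2 / Real.pi))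
      ((Real.exp (r₀ ^ 2 / 2) * xi r₀) + r₀ * (r₀ * (Real.exp (r₀ ^ 2 / 2) * xi r₀) + Real.sqrt (2 / Real.pi))) r₀ := by
    have h1 := ((hasDerivAt_id r₀).fun_mul hUf).add_const (Real.sqrt (2 / Real.pi))
    simp only [id_eq] at h1
    have h2 : (fun r : ℝ => r * (Real.exp (r ^ 2 / 2) * xi r) + Real.sqrt (2 / Real.pi))
        = (fun r : ℝ => r * Real.exp (r ^ 2 / 2) * xi r + Real.sqrt (2 / Real.pi)) := by
      funext r; ring
    rw [h2] at h1
    refine h1.congr_deriv ?_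
    ring
  have hden := (hDf.fun_pow 2).const_mul Real.pi
  have hdenne : Real.pi * (r₀ * Real.exp (r₀ ^ 2 / 2) * xi r₀ + Real.sqrt (2 / Real.pi)) ^ 2 ≠ 0 :=
    mul_ne_zero hπ.ne' (pow_ne_zero 2 hd0)
  have hvar := hnum.fun_div hden hdenne
  have hvar' : HasDerivAt (varII a M) _ r₀ := hvar
  have hloc : IsLocalMax (varII a M) r₀ := Filter.Eventually.of_forall (fun r => hmax r)
  have hdiff : DifferentiableAt ℝ (varII a M) r₀ := hvar'.differentiableAt
  have h0 := hdiff.hasDerivAt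
  rw [hloc.deriv_eq_zero] at h0
  have hW0 := hvar'.unique h0
  beta_reduce at hW0
  rcases div_eq_zero_iff.mp hW0 with hnum0 | hdd
  swap
  · exact absurd hdd (pow_ne_zero 2 hdenne)
  -- derive the first-order condition
  have h5 : (M - a) ^ 2 * (Real.pi * ((r₀ * Real.exp (r₀ ^ 2 / 2) * xi r₀ + Real.sqrt (2 / Real.pi)) * ((2 * Real.pi * r₀ * (Real.exp (r₀ ^ 2 / 2) * xi r₀) ^ 2 + 2 * Real.pi * Real.sqrt (2 / Real.pi) * (Real.exp (r₀ ^ 2 / 2) * xi r₀) - Real.pi * Real.sqrt (2 / Real.pi) * ((Real.exp (r₀ ^ 2 / 2) * xi r₀) + r₀ * (r₀ * (Real.exp (r₀ ^ 2 / 2) * xi r₀) + Real.sqrt (2 / Real.pi)))) * (r₀ * Real.exp (r₀ ^ 2 / 2) * xi r₀ + Real.sqrt (2 / Real.pi)) - 2 * (Real.pi * (Real.exp (r₀ ^ 2 / 2) * xi r₀) ^ 2 - Real.pi * Real.sqrt (2 / Real.pi) * r₀ * (Real.exp (r₀ ^ 2 / 2) * xi r₀) - 2) * ((Real.exp (r₀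 ^ 2 / 2) * xi r₀) + r₀ * (r₀ * (Real.exp (r₀ ^ 2 / 2) * xi r₀) + Real.sqrt (2 / Real.pi)))))) = 0 := by
    linear_combination hnum0 - (-2 * (M - a) ^ 2 * Real.pi ^ 2 * Real.exp (r₀ ^ 2 / 2) ^ 2 * xi r₀ ^ 4 * r₀ - 2 * (M - a) ^ 2 * Real.pi ^ 2 * Real.sqrt (2 / Real.pi) * Real.exp (r₀ ^ 2 / 2) * xi r₀ ^ 3 + 2 * (M - a) ^ 2 * Real.pi ^ 2 * Real.sqrt (2 / Real.pi) * Real.exp (r₀ ^ 2 / 2) ^ 2 * Real.exp (-(r₀ ^ 2 / 2)) * xi r₀ ^ 3 * r₀ ^ 2 + 4 * (M - a) ^ 2 * Real.pi ^ 2 * Real.sqrt (2 / Real.pi) ^ 2 * Real.exp (r₀ ^ 2 / 2) * Real.exp (-(r₀ ^ 2 / 2)) * xi r₀ ^ 2 * r₀ + 2 * (M - a) ^ 2 * Real.pi ^ 2 * Real.sqrt (2 / Real.pi) ^ 3 * Real.exp (-(r₀ ^ 2 / 2)) * xi r₀) * hE2 - ((M - a) ^ 2 * Real.pi * Real.exp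 (r₀ ^ 2 / 2) ^ 3 * xi r₀ ^ 3 * r₀ ^ 2 + (M - a) ^ 2 * Real.pi * Real.exp (r₀ ^ 2 / 2) ^ 3 * xi r₀ ^ 3 * r₀ ^ 4 + 2 * (M - a) ^ 2 * Real.pi * Real.sqrt (2 / Real.pi) * Real.exp (r₀ ^ 2 / 2) ^ 2 * xi r₀ ^ 2 * r₀ ^ 3 - (M - a) ^ 2 * Real.pi * Real.sqrt (2 / Real.pi) * Real.exp (r₀ ^ 2 / 2) ^ 3 * Real.exp (-(r₀ ^ 2 / 2)) * xi r₀ ^ 2 * r₀ ^ 3 - (M - a) ^ 2 * Real.pi * Real.sqrt (2 / Real.pi) ^ 2 * Real.exp (r₀ ^ 2 / 2) * xi r₀ + (M - a) ^ 2 * Real.pi * Real.sqrt (2 / Real.pi) ^ 2 * Real.exp (r₀ ^ 2 / 2) * xi r₀ * r₀ ^ 2 - 2 * (M - a) ^ 2 * Real.pi * Real.sqrt (2 / Real.pi) ^ 2 * Real.exp (r₀ ^ 2 / 2) ^ 2 * Real.exp (-(r₀ ^ 2 / 2)) * xi r₀ * r₀ ^ 2 - (M - a) ^ 2 * Real.pi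 * Real.sqrt (2 / Real.pi) ^ 3 * Real.exp (r₀ ^ 2 / 2) * Real.exp (-(r₀ ^ 2 / 2)) * r₀) * hs - (2 * (M - a) ^ 2 * Real.pi ^ 2 * Real.sqrt (2 / Real.pi) * Real.exp (r₀ ^ 2 / 2) ^ 3 * xi r₀ ^ 3 * r₀ ^ 2 + 4 * (M - a) ^ 2 * Real.pi ^ 2 * Real.sqrt (2 / Real.pi) ^ 2 * Real.exp (r₀ ^ 2 / 2) ^ 2 * xi r₀ ^ 2 * r₀ - (M - a) ^ 2 * Real.pi ^ 2 * Real.sqrt (2 / Real.pi) ^ 2 * Real.exp (r₀ ^ 2 / 2) ^ 2 * xi r₀ ^ 2 * r₀ ^ 3 + 2 * (M - a) ^ 2 * Real.pi ^ 2 * Real.sqrt (2 / Real.pi) ^ 3 * Real.exp (r₀ ^ 2 / 2) * xi r₀ - 2 * (M - a) ^ 2 * Real.pi ^ 2 * Real.sqrt (2 / Real.pi) ^ 3 * Real.exp (r₀ ^ 2 / 2) * xi r₀ * r₀ ^ 2 - (M - a) ^ 2 * Real.pi ^ 2 * Real.sqrt (2 / Real.pi) ^ 4 * r₀) * hPQ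
  have h6 : Real.pi * ((r₀ * Real.exp (r₀ ^ 2 / 2) * xi r₀ + Real.sqrt (2 / Real.pi)) * ((2 * Real.pi * r₀ * (Real.exp (r₀ ^ 2 / 2) * xi r₀) ^ 2 + 2 * Real.pi * Real.sqrt (2 / Real.pi) * (Real.exp (r₀ ^ 2 / 2) * xi r₀) - Real.pi * Real.sqrt (2 / Real.pi) * ((Real.exp (r₀ ^ 2 / 2) * xi r₀) + r₀ * (r₀ * (Real.exp (r₀ ^ 2 / 2) * xi r₀) + Real.sqrt (2 / Real.pi)))) * (r₀ * Real.exp (r₀ ^ 2 / 2) * xi r₀ + Real.sqrt (2 / Real.pi)) - 2 * (Real.pi * (Real.exp (r₀ ^ 2 / 2) * xi r₀) ^ 2 - Real.pi * Real.sqrt (2 / Real.pi) * r₀ * (Real.exp (r₀ ^ 2 / 2) * xi r₀) - 2) * ((Real.exp (r₀ ^ 2 / 2) * xi r₀) + r₀ * (r₀ * (Real.exp (r₀ ^ 2 / 2) * xi r₀) + Real.sqrt (2 / Real.pi))))) = 0 :=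
    (mul_eq_zero.mp h5).resolve_left hK.ne'
  have h7 : (r₀ * Real.exp (r₀ ^ 2 / 2) * xi r₀ + Real.sqrt (2 / Real.pi)) * ((2 * Real.pi * r₀ * (Real.exp (r₀ ^ 2 / 2) * xi r₀) ^ 2 + 2 * Real.pi * Real.sqrt (2 / Real.pi) * (Real.exp (r₀ ^ 2 / 2) * xi r₀) - Real.pi * Real.sqrt (2 / Real.pi) * ((Real.exp (r₀ ^ 2 / 2) * xi r₀) + r₀ * (r₀ * (Real.exp (r₀ ^ 2 / 2) * xi r₀) + Real.sqrt (2 / Real.pi)))) * (r₀ * Real.exp (r₀ ^ 2 / 2) * xi r₀ + Real.sqrt (2 / Real.pi)) - 2 * (Real.pi * (Real.exp (r₀ ^ 2 / 2) * xi r₀) ^ 2 - Real.pi * Real.sqrt (2 / Real.pi) * r₀ * (Real.exp (r₀ ^ 2 / 2) * xi r₀) - 2) * ((Real.exp (r₀ ^ 2 / 2) * xi r₀) + r₀ * (r₀ * (Real.exp (r₀ ^ 2 / 2) * xi r₀) + Real.sqrt (2 / Real.pi)))) = 0 := (mul_eq_zero.mp h6).resolve_left hπ.ne'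
  have hF : ((2 * Real.pi * r₀ * (Real.exp (r₀ ^ 2 / 2) * xi r₀) ^ 2 + 2 * Real.pi * Real.sqrt (2 / Real.pi) * (Real.exp (r₀ ^ 2 / 2) * xi r₀) - Real.pi * Real.sqrt (2 / Real.pi) * ((Real.exp (r₀ ^ 2 / 2) * xi r₀) + r₀ * (r₀ * (Real.exp (r₀ ^ 2 / 2) * xi r₀) + Real.sqrt (2 / Real.pi)))) * (r₀ * Real.exp (r₀ ^ 2 / 2) * xi r₀ + Real.sqrt (2 / Real.pi)) - 2 * (Real.pi * (Real.exp (r₀ ^ 2 / 2) * xi r₀) ^ 2 - Real.pi * Real.sqrt (2 / Real.pi) * r₀ * (Real.exp (r₀ ^ 2 / 2) * xi r₀) - 2) * ((Real.exp (r₀ ^ 2 / 2) * xi r₀) + r₀ * (r₀ * (Real.exp (r₀ ^ 2 / 2) * xi r₀) + Real.sqrt (2 / Real.pi)))) = 0 := (mul_eq_zero.mp h7).resolve_left hd0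
  -- the key algebraic inequality
  have h4 : 4 * (Real.pi * (Real.exp (r₀ ^ 2 / 2) * xi r₀) ^ 2) ^ 2 = 6 * (Real.pi * (Real.exp (r₀ ^ 2 / 2) * xi r₀) ^ 2) * (Real.pi * Real.sqrt (2 / Real.pi) * r₀ * (Real.exp (r₀ ^ 2 / 2) * xi r₀)) + 12 * (Real.pi * (Real.exp (r₀ ^ 2 / 2) * xi r₀) ^ 2) + 4 * (Real.pi * Real.sqrt (2 / Real.pi) * r₀ * (Real.exp (r₀ ^ 2 / 2) * xi r₀)) ^ 2 + 4 * (Real.pi * Real.sqrt (2 / Real.pi) * r₀ * (Real.exp (r₀ ^ 2 / 2) * xi r₀)) + (Real.pi * Real.sqrt (2 / Real.pi) * r₀ * (Real.exp (r₀ ^ 2 / 2) * xi r₀)) ^ 3 := by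
    linear_combination (-2 * Real.pi * (Real.exp (r₀ ^ 2 / 2) * xi r₀)) * hF + (-4 * Real.pi * (Real.exp (r₀ ^ 2 / 2) * xi r₀) ^ 2 * r₀ ^ 2 - Real.pi ^ 2 * Real.sqrt (2 / Real.pi) * (Real.exp (r₀ ^ 2 / 2) * xi r₀) ^ 3 * r₀ ^ 3 + 2 * Real.pi * (Real.exp (r₀ ^ 2 / 2) * xi r₀) ^ 2 - 2 * Real.pi * Real.sqrt (2 / Real.pi) * (Real.exp (r₀ ^ 2 / 2) * xi r₀) * r₀) * hc2
  have hUne : (Real.exp (r₀ ^ 2 / 2) * xi r₀) ≠ 0 := mul_ne_zero hPpos.ne' hX0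
  have hxpos : (0:ℝ) < (Real.pi * (Real.exp (r₀ ^ 2 / 2) * xi r₀) ^ 2) :=
    mul_pos hπ (lt_of_le_of_ne (sq_nonneg _) (Ne.symm (pow_ne_zero 2 hUne)))
  have hkey := key_alg (Real.pi * (Real.exp (r₀ ^ 2 / 2) * xi r₀) ^ 2) (Real.pi * Real.sqrt (2 / Real.pi) * r₀ * (Real.exp (r₀ ^ 2 / 2) * xi r₀)) hxpos h4
  -- conclude
  have hA : Real.pi * Real.exp (r₀ ^ 2) * xi r₀ ^ 2 = (Real.pi * (Real.exp (r₀ ^ 2 / 2) * xi r₀) ^ 2) := by rw [hE2]; ring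
  have hB : Real.sqrt (2 * Real.pi) * r₀ * Real.exp (r₀ ^ 2 / 2) * xi r₀ = (Real.pi * Real.sqrt (2 / Real.pi) * r₀ * (Real.exp (r₀ ^ 2 / 2) * xi r₀)) := by
    rw [hs]; ring
  have hC : Real.pi * (r₀ * Real.exp (r₀ ^ 2 / 2) * xi r₀ + Real.sqrt (2 / Real.pi)) ^ 2
      = Real.pi * r₀ ^ 2 * (Real.exp (r₀ ^ 2 / 2) * xi r₀) ^ 2 + 2 * (Real.pi * Real.sqrt (2 / Real.pi) * r₀ * (Real.exp (r₀ ^ 2 / 2) * xi r₀)) + 2 := by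
    linear_combination hc2
  have hy2 : (Real.pi * Real.sqrt (2 / Real.pi) * r₀ * (Real.exp (r₀ ^ 2 / 2) * xi r₀)) ^ 2 = 2 * (Real.pi * r₀ ^ 2 * (Real.exp (r₀ ^ 2 / 2) * xi r₀) ^ 2) := by
    linear_combination (Real.pi * r₀ ^ 2 * (Real.exp (r₀ ^ 2 / 2) * xi r₀) ^ 2) * hc2
  have hNlt : Real.pi * Real.exp (r₀ ^ 2) * xi r₀ ^ 2 -
        Real.sqrt (2 * Real.pi) * r₀ * Real.exp (r₀ ^ 2 / 2) * xi r₀ - 2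
      < Real.pi * (r₀ * Real.exp (r₀ ^ 2 / 2) * xi r₀ + Real.sqrt (2 / Real.pi)) ^ 2 := by
    rw [hA, hB, hC]
    linarith [hkey, hy2]
  have hDpos : (0:ℝ) < Real.pi * (r₀ * Real.exp (r₀ ^ 2 / 2) * xi r₀ + Real.sqrt (2 / Real.pi)) ^ 2 :=
    mul_pos hπ (lt_of_le_of_ne (sq_nonneg _) (Ne.symm (pow_ne_zero 2 hd0)))
  have hfin : varII a M r₀ = (M - a) ^ 2 *
      (Real.pi * Real.exp (r₀ ^ 2) * xi r₀ ^ 2 -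
        Real.sqrt (2 * Real.pi) * r₀ * Real.exp (r₀ ^ 2 / 2) * xi r₀ - 2) /
      (Real.pi * (r₀ * Real.exp (r₀ ^ 2 / 2) * xi r₀ + Real.sqrt (2 / Real.pi)) ^ 2) := rfl
  rw [hfin, div_lt_iff₀ hDpos]
  nlinarith [hNlt, hK]
end
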